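/- Let (a_m, b_m), for m in a finite nonempty index set M, be pairs of natural numbers, and for a positive integer k define 𝔐_k(r) = min_{m∈M} ((k−r)·a_m + r·b_m). Say that property P(k) holds if for every integer r with 0 ≤ r ≤ k−1 there exists m ∈ M such that 𝔐_k(r) = (k−r)·a_m + r·b_m and 𝔐_k(r+1) = (k−r−1)·a_m + (r+1)·b_m. Then there exists a positive integer k₀ such that for every positive integer k, P(k) holds if and only if k₀ divides k. -/

import Mathlib

set_option linter.unusedSectionVars false

open Finset

noncomputable section KulikovAux

variable {M : Type*} [Fintype M] [Nonempty M]

def klin (a b : M → ℕ) (m : M) (t : ℝ) : ℝ := (1 - t) * a m + t * b m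
def kenv (a b : M → ℕ) (t : ℝ) : ℝ :=
  Finset.univ.inf' Finset.univ_nonempty (fun m => klin a b m t)
def kAtt (a b : M → ℕ) (t : ℝ) (m : M) : Prop := kenv a b t = klin a b m t
def kslope (a b : M → ℕ) (m : M) : ℝ := (b m : ℝ) - a m
def kKink (a b : M → ℕ) (t : ℝ) : Prop :=
  0 < t ∧ t < 1 ∧ ∃ i j : M, kAtt a b t i ∧ kAtt a b t j ∧ kslope a b i ≠ kslope a b j
def kQ (a b : M → ℕ) (k : ℕ) : Prop := ∀ t : ℝ, kKink a b t → ∃ r : ℕ, t = (r : ℝ) / k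
def kP (a b : M → ℕ) (k : ℕ) : Prop :=
  ∀ r : ℕ, r + 1 ≤ k → ∃ m : M, kAtt a b ((r : ℝ)/k) m ∧ kAtt a b (((r : ℝ)+1)/k) m

variable {a b : M → ℕ}

lemma klin_sub (i m : M) (s t : ℝ) :
    klin a b i s - klin a b m s
      = (klin a b i t - klin a b m t) + (s - t) * (kslope a b i - kslope a b m) := by
  simp only [klin, kslope]; ring

lemma kenv_le (t : ℝ) (m : M) : kenv a b t ≤ klin a b m t :=
  Finset.inf'_le _ (mem_univ m)

lemma exists_kAtt (t : ℝ) : ∃ m : M, kAtt a b t m := by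
  obtain ⟨m, -, hm⟩ := Finset.exists_mem_eq_inf' (Finset.univ_nonempty) (fun m => klin a b m t)
  exact ⟨m, hm⟩

lemma kAtt_of_forall {t : ℝ} {m : M} (h : ∀ j, klin a b m t ≤ klin a b j t) :
    kAtt a b t m :=
  le_antisymm (kenv_le t m) (Finset.le_inf' _ _ fun j _ => h j)

lemma kAtt_le {t : ℝ} {m : M} (hm : kAtt a b t m) (j : M) :
    klin a b m t ≤ klin a b j t := hm ▸ kenv_le t j

lemma affine_between {c e u t v : ℝ} (hu : u ≤ t) (hv : t ≤ v)
    (h1 : 0 ≤ c + u * e) (h2 : 0 ≤ c + v * e) : 0 ≤ c + t * e := by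
  rcases eq_or_lt_of_le (hu.trans hv) with h | h
  · have : t = u := le_antisymm (h ▸ hv) hu
    rwa [this]
  · nlinarith [mul_nonneg h1 (sub_nonneg.2 hv), mul_nonneg h2 (sub_nonneg.2 hu)]

lemma klin_le_between {i m : M} {u t v : ℝ} (hu : u ≤ t) (hv : t ≤ v)
    (h1 : klin a b m u ≤ klin a b i u) (h2 : klin a b m v ≤ klin a b i v) :
    klin a b m t ≤ klin a b i t := by
  have e1 : 0 ≤ ((a i : ℝ) - a m) + u * (kslope a b i - kslope a b m) := by
    simp only [klin, kslope] at h1 ⊢; nlinarith [h1]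
  have e2 : 0 ≤ ((a i : ℝ) - a m) + v * (kslope a b i - kslope a b m) := by
    simp only [klin, kslope] at h2 ⊢; nlinarith [h2]
  have := affine_between hu hv e1 e2
  simp only [klin, kslope] at this ⊢; nlinarith [this]

lemma affine_cross {c e u v : ℝ} (hden : (c + u * e) + -(c + v * e) ≠ 0) :
    c + (u + (c + u * e) * (v - u) / ((c + u * e) + -(c + v * e))) * e = 0 := by
  have h2 : (c + u * e) + -(c + v * e) = u * e - e * v := by ring
  rw [h2] at hden ⊢
  have key : (c + u * e) * (v - u) / (u * e - e * v) * e = -(c + u * e) := by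
    rw [div_mul_eq_mul_div, div_eq_iff hden]; ring
  linear_combination key

/-- Q implies P. -/
lemma kQ_imp_kP {k : ℕ} (hk : 0 < k) (hQ : kQ a b k) : kP a b k := by
  classical
  intro r hr
  have hk' : (0:ℝ) < k := by exact_mod_cast hk
  set u : ℝ := (r : ℝ) / k with hu
  set v : ℝ := ((r : ℝ) + 1) / k with hv
  have huv : u < v := by rw [hu, hv, div_lt_div_iff_of_pos_right hk']; linarith
  have hu0 : 0 ≤ u := div_nonneg (Nat.cast_nonneg r) hk'.le
  have hv1 : v ≤ 1 := by
    rw [hv, div_le_one hk']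
    have : ((r : ℝ) + 1) = ((r + 1 : ℕ) : ℝ) := by push_cast; ring
    rw [this]; exact_mod_cast hr
  set S : Finset M := Finset.univ.filter (fun m => kAtt a b u m) with hS
  have hSne : S.Nonempty := by
    obtain ⟨m, hm⟩ := exists_kAtt (a := a) (b := b) u
    exact ⟨m, by simp [hS, hm]⟩
  obtain ⟨m, hmS, hmin⟩ := S.exists_min_image (kslope a b) hSne
  have hmu : kAtt a b u m := (Finset.mem_filter.mp hmS).2
  by_cases hmv : kAtt a b v m
  · exact ⟨m, hmu, hmv⟩
  set J : Finset M := Finset.univ.filter (fun j => klin a b j v < klin a b m v) with hJdef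
  have hJ : J.Nonempty := by
    obtain ⟨j₁, hj₁⟩ := exists_kAtt (a := a) (b := b) v
    refine ⟨j₁, ?_⟩
    simp only [hJdef, Finset.mem_filter, Finset.mem_univ, true_and]
    rcases lt_or_eq_of_le (hj₁ ▸ kenv_le v m) with h | h
    · exact h
    · exact absurd (hj₁.trans h) hmv
  have hJu : ∀ j ∈ J, klin a b m u < klin a b j u := by
    intro j hj
    have hjv : klin a b j v < klin a b m v := (Finset.mem_filter.mp hj).2
    rcases lt_or_eq_of_le (kAtt_le hmu j) with h | h
    · exact h
    · exfalso
      have hjS : j ∈ S := by simp [hS, kAtt, hmu.trans h]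
      have hms : kslope a b m ≤ kslope a b j := hmin j hjS
      have := klin_sub (a := a) (b := b) j m v u
      nlinarith [mul_le_mul_of_nonneg_left hms (by linarith : (0:ℝ) ≤ v - u)]
  -- crossing times
  set tj : M → ℝ := fun j =>
    u + (klin a b j u - klin a b m u) * (v - u)
        / ((klin a b j u - klin a b m u) + (klin a b m v - klin a b j v)) with htj
  have hcross : ∀ j ∈ J, u < tj j ∧ tj j < v ∧ klin a b j (tj j) = klin a b m (tj j) := by
    intro j hj
    have hcu : 0 < klin a b j u - klin a b m u := by linarith [hJu j hj]
    have hcv : 0 < klin a b m v - klin a b j v := by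
      linarith [(Finset.mem_filter.mp hj).2]
    have hden : 0 < (klin a b j u - klin a b m u) + (klin a b m v - klin a b j v) := by
      linarith
    refine ⟨?_, ?_, ?_⟩
    · have : 0 < (klin a b j u - klin a b m u) * (v - u)
          / ((klin a b j u - klin a b m u) + (klin a b m v - klin a b j v)) :=
        div_pos (mul_pos hcu (by linarith)) hden
      simp only [htj]; linarith
    · simp only [htj]
      rw [← sub_pos]
      have : (klin a b j u - klin a b m u) * (v - u)
          / ((klin a b j u - klin a b m u) + (klin a b m v - klin a b j v)) < v - u := by
        rw [div_lt_iff₀ hden]; nlinarith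
      linarith
    · have hrepr : ∀ s : ℝ, klin a b j s - klin a b m s
          = ((a j : ℝ) - a m) + s * (kslope a b j - kslope a b m) := by
        intro s; simp only [klin, kslope]; ring
      have e1 : klin a b j u - klin a b m u
          = ((a j : ℝ) - a m) + u * (kslope a b j - kslope a b m) := hrepr u
      have e2 : klin a b m v - klin a b j v
          = -(((a j : ℝ) - a m) + v * (kslope a b j - kslope a b m)) := by
        linarith [hrepr v]
      rw [e1, e2] at hden
      have key : ((a j : ℝ) - a m) + (tj j) * (kslope a b j - kslope a b m) = 0 := by
        rw [htj]
        simp only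
        rw [e1, e2]
        exact affine_cross (ne_of_gt hden)
      linarith [hrepr (tj j), key]
  set w : ℝ := J.inf' hJ tj with hw
  obtain ⟨j₀, hj₀J, hwj₀⟩ := Finset.exists_mem_eq_inf' hJ tj
  have hwu : u < w := by rw [hw, hwj₀]; exact (hcross j₀ hj₀J).1
  have hwv : w < v := by rw [hw, hwj₀]; exact (hcross j₀ hj₀J).2.1
  have hwle : ∀ j ∈ J, w ≤ tj j := fun j hj => Finset.inf'_le _ hj
  have hAttm : kAtt a b w m := by
    apply kAtt_of_forall
    intro j'
    by_cases hj' : j' ∈ J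
    · exact klin_le_between hwu.le (hwle j' hj') (kAtt_le hmu j')
        (le_of_eq (hcross j' hj').2.2.symm)
    · have hj'v : klin a b m v ≤ klin a b j' v := by
        by_contra hcon
        exact hj' (by simp [hJdef, not_le.mp hcon])
      exact klin_le_between hwu.le hwv.le (kAtt_le hmu j') hj'v
  have hAttj₀ : kAtt a b w j₀ := by
    have : klin a b j₀ w = klin a b m w := by rw [hw, hwj₀]; exact (hcross j₀ hj₀J).2.2
    rw [kAtt, this]; exact hAttm
  have hslope : kslope a b j₀ ≠ kslope a b m := by
    intro h
    have h1 := hJu j₀ hj₀J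
    have h2 := (Finset.mem_filter.mp hj₀J).2
    have := klin_sub (a := a) (b := b) j₀ m v u
    rw [h] at this
    nlinarith
  have hkink : kKink a b w := ⟨lt_of_le_of_lt hu0 hwu, lt_of_lt_of_le hwv hv1,
    j₀, m, hAttj₀, hAttm, hslope⟩
  obtain ⟨r', hr'⟩ := hQ w hkink
  exfalso
  have h1 : (r : ℝ) < r' := by
    have := hwu; rw [hr', hu, div_lt_div_iff_of_pos_right hk'] at this; exact this
  have h2 : (r' : ℝ) < r + 1 := by
    have := hwv; rw [hr', hv, div_lt_div_iff_of_pos_right hk'] at this; exact this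
  have h1' : r < r' := by exact_mod_cast h1
  have h2' : r' < r + 1 := by exact_mod_cast h2
  omega

lemma exists_kQ : ∃ k : ℕ, 0 < k ∧ kQ a b k := by
  classical
  set D : M × M → ℤ := fun p => ((b p.1 : ℤ) - a p.1) - ((b p.2 : ℤ) - a p.2) with hD
  set s : Finset (M × M) := Finset.univ.filter (fun p => D p ≠ 0) with hs
  set K : ℕ := ∏ p ∈ s, (D p).natAbs with hK
  have hK0 : 0 < K := Finset.prod_pos fun p hp =>
    Int.natAbs_pos.2 (Finset.mem_filter.mp hp).2
  refine ⟨K, hK0, ?_⟩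
  rintro t ⟨ht0, ht1, i, j, hi, hj, hij⟩
  have heq : klin a b i t = klin a b j t := hi.symm.trans hj
  have hDij : D (i, j) ≠ 0 := by
    intro h
    apply hij
    simp only [hD] at h
    have : (b i : ℤ) - a i = (b j : ℤ) - a j := by omega
    simp only [kslope]
    exact_mod_cast this
  have hmem : (i, j) ∈ s := Finset.mem_filter.2 ⟨Finset.mem_univ _, hDij⟩
  have hdvd : ((D (i, j)).natAbs : ℤ) ∣ (K : ℤ) :=
    Int.natCast_dvd_natCast.mpr (Finset.dvd_prod_of_mem _ hmem)
  obtain ⟨c, hc⟩ := Int.natAbs_dvd.mp hdvd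
  have key : t * ((D (i, j) : ℤ) : ℝ) = (a j : ℝ) - a i := by
    have := klin_sub (a := a) (b := b) i j t 0
    simp only [klin, kslope, hD] at this heq ⊢
    push_cast
    nlinarith [this]
  set z : ℤ := ((a j : ℤ) - a i) * c with hz
  have hzt : (K : ℝ) * t = (z : ℝ) := by
    have hc' : (K : ℝ) = ((D (i, j) : ℤ) : ℝ) * (c : ℝ) := by exact_mod_cast congrArg (fun n : ℤ => (n : ℝ)) hc
    rw [hc']
    push_cast [hz]
    linear_combination (c : ℝ) * key
  have hz0 : 0 ≤ z := by
    have : (0 : ℝ) ≤ (z : ℝ) := by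
      rw [← hzt]
      positivity
    exact_mod_cast this
  refine ⟨z.toNat, ?_⟩
  have hzr : ((z.toNat : ℕ) : ℝ) = (z : ℝ) := by exact_mod_cast Int.toNat_of_nonneg hz0
  rw [eq_div_iff (by positivity : (K : ℝ) ≠ 0), hzr, ← hzt]
  ring

lemma kQ_mul {k n : ℕ} (hn : 0 < n) (h : kQ a b k) : kQ a b (k * n) := by
  intro t ht
  obtain ⟨r, hr⟩ := h t ht
  refine ⟨r * n, ?_⟩
  rw [hr]
  push_cast
  rw [mul_div_mul_right _ _ (by exact_mod_cast hn.ne' : (n : ℝ) ≠ 0)]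

lemma kQ_gcd {k l : ℕ} (hk : 0 < k) (hl : 0 < l) (hQk : kQ a b k) (hQl : kQ a b l) :
    kQ a b (Nat.gcd k l) := by
  intro t ht
  have ht0 : 0 < t := ht.1
  obtain ⟨r, hr⟩ := hQk t ht
  obtain ⟨sσ, hsσ⟩ := hQl t ht
  have hk' : (0:ℝ) < k := by exact_mod_cast hk
  have hl' : (0:ℝ) < l := by exact_mod_cast hl
  have hkt : (k : ℝ) * t = r := by rw [hr]; field_simp
  have hlt : (l : ℝ) * t = sσ := by rw [hsσ]; field_simp
  set g : ℕ := Nat.gcd k l with hg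
  have hg0 : 0 < g := Nat.gcd_pos_of_pos_left l hk
  have hbez : (g : ℤ) = k * Nat.gcdA k l + l * Nat.gcdB k l := Nat.gcd_eq_gcd_ab k l
  set z : ℤ := Nat.gcdA k l * r + Nat.gcdB k l * sσ with hz
  have hbez' : ((g : ℕ) : ℝ) = (k : ℝ) * ((Nat.gcdA k l : ℤ) : ℝ) + (l : ℝ) * ((Nat.gcdB k l : ℤ) : ℝ) := by
    exact_mod_cast congrArg (fun n : ℤ => (n : ℝ)) hbez
  have hzt : (g : ℝ) * t = (z : ℝ) := by
    push_cast [hz]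
    linear_combination t * hbez' + ((Nat.gcdA k l : ℤ) : ℝ) * hkt + ((Nat.gcdB k l : ℤ) : ℝ) * hlt
  have hz0 : 0 ≤ z := by
    have : (0 : ℝ) ≤ (z : ℝ) := by
      rw [← hzt]
      positivity
    exact_mod_cast this
  refine ⟨z.toNat, ?_⟩
  have hzr : ((z.toNat : ℕ) : ℝ) = (z : ℝ) := by exact_mod_cast Int.toNat_of_nonneg hz0
  rw [eq_div_iff (by positivity : (g : ℝ) ≠ 0), hzr, ← hzt]
  ring

lemma kscale {k : ℕ} (hk : 0 < k) (x : ℝ) (m : M) :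
    (Finset.univ.inf' Finset.univ_nonempty
        (fun m' => ((k : ℝ) - x) * (a m' : ℝ) + x * (b m' : ℝ))
      = ((k : ℝ) - x) * (a m : ℝ) + x * (b m : ℝ)) ↔ kAtt a b (x / k) m := by
  have hk' : (0:ℝ) < k := by exact_mod_cast hk
  have key : ∀ m' : M, ((k : ℝ) - x) * (a m' : ℝ) + x * (b m' : ℝ)
      = k * klin a b m' (x / k) := by
    intro m'
    simp only [klin]
    field_simp
  have hinf : Finset.univ.inf' Finset.univ_nonempty
      (fun m' => ((k : ℝ) - x) * (a m' : ℝ) + x * (b m' : ℝ))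
      = (k : ℝ) * kenv a b (x / k) := by
    apply le_antisymm
    · obtain ⟨m₀, hm₀⟩ := exists_kAtt (a := a) (b := b) (x / k)
      calc Finset.univ.inf' Finset.univ_nonempty
            (fun m' => ((k : ℝ) - x) * (a m' : ℝ) + x * (b m' : ℝ))
          ≤ ((k : ℝ) - x) * (a m₀ : ℝ) + x * (b m₀ : ℝ) := Finset.inf'_le _ (Finset.mem_univ m₀)
        _ = (k : ℝ) * klin a b m₀ (x / k) := key m₀
        _ = (k : ℝ) * kenv a b (x / k) := by rw [← hm₀]
    · apply Finset.le_inf'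
      intro j _
      rw [key j]
      exact mul_le_mul_of_nonneg_left (kenv_le _ j) hk'.le
  rw [hinf, key m, kAtt]
  constructor
  · intro h
    exact mul_left_cancel₀ (ne_of_gt hk') h
  · intro h
    rw [h]

/-- P implies Q. -/
lemma kP_imp_kQ {k : ℕ} (hk : 0 < k) (hP : kP a b k) : kQ a b k := by
  intro t ht
  obtain ⟨ht0, ht1, i, j, hi, hj, hij⟩ := ht
  by_contra hno
  push_neg at hno
  have hk' : (0:ℝ) < k := by exact_mod_cast hk
  set x : ℝ := (k : ℝ) * t with hx
  have hx0 : 0 < x := mul_pos hk' ht0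
  have hxk : x < k := by nlinarith
  set r : ℕ := ⌊x⌋₊ with hrdef
  have hr1 : (r : ℝ) ≤ x := Nat.floor_le hx0.le
  have hr2 : x < (r : ℝ) + 1 := Nat.lt_floor_add_one x
  have hne : (r : ℝ) ≠ x := by
    intro h
    exact hno r (by rw [eq_div_iff hk'.ne', h, hx]; ring)
  have hr1' : (r : ℝ) < x := lt_of_le_of_ne hr1 hne
  have hrk : r + 1 ≤ k := by
    have : (r : ℝ) < k := lt_of_le_of_lt hr1 hxk
    exact_mod_cast Nat.cast_lt.mp this
  set u : ℝ := (r : ℝ) / k with hu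
  set v : ℝ := ((r : ℝ) + 1) / k with hv
  have hut : u < t := by rw [hu, div_lt_iff₀ hk']; nlinarith
  have htv : t < v := by rw [hv, lt_div_iff₀ hk']; nlinarith
  obtain ⟨m, hmu, hmv⟩ := hP r hrk
  have hall : ∀ s, u ≤ s → s ≤ v → kAtt a b s m := by
    intro s h1 h2
    exact kAtt_of_forall fun j' =>
      klin_le_between h1 h2 (kAtt_le hmu j') (kAtt_le hmv j')
  obtain ⟨i', hi', hsi⟩ : ∃ i', kAtt a b t i' ∧ kslope a b i' ≠ kslope a b m := by
    by_cases h : kslope a b i = kslope a b m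
    · exact ⟨j, hj, fun hh => hij (by rw [h, hh])⟩
    · exact ⟨i, hi, h⟩
  have hAtt_t : kAtt a b t m := hall t hut.le htv.le
  have heq : klin a b i' t = klin a b m t := hi'.symm.trans hAtt_t
  rcases lt_or_gt_of_ne (sub_ne_zero.2 hsi) with he | he
  · -- slope i' < slope m : i' is below m to the right of t
    set s : ℝ := (t + v) / 2 with hs
    have hts : t < s := by rw [hs]; linarith
    have hsv : s < v := by rw [hs]; linarith
    have hlt : klin a b i' s < klin a b m s := by
      have := klin_sub (a := a) (b := b) i' m s t
      nlinarith [mul_neg_of_pos_of_neg (by linarith : (0:ℝ) < s - t) he]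
    have hAs : kAtt a b s m := hall s (by linarith) hsv.le
    exact absurd (kAtt_le hAs i') (not_le.2 hlt)
  · -- slope i' > slope m : i' is below m to the left of t
    set s : ℝ := (u + t) / 2 with hs
    have hus : u < s := by rw [hs]; linarith
    have hst : s < t := by rw [hs]; linarith
    have hlt : klin a b i' s < klin a b m s := by
      have := klin_sub (a := a) (b := b) i' m s t
      nlinarith [mul_neg_of_neg_of_pos (by linarith : s - t < 0) he]
    have hAs : kAtt a b s m := hall s hus.le (by linarith)
    exact absurd (kAtt_le hAs i') (not_le.2 hlt)


end KulikovAux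

/-- Let `(a_m, b_m)` (`m` in a finite nonempty index set) be pairs of naturals and
for `k ≥ 1` let `𝔐_k(r) = min_m ((k-r)a_m + r b_m)`. Say `P(k)` holds if for every
integer `0 ≤ r ≤ k-1` some `m` attains the minimum at both `r` and `r+1`. Then there
is a positive integer `k₀` such that for every `k ≥ 1`, `P(k)` holds iff `k₀ ∣ k`. -/
theorem stmt_14 {M : Type*} [Fintype M] [Nonempty M] (a b : M → ℕ) :
    ∃ k₀ : ℕ, 0 < k₀ ∧ ∀ k : ℕ, 0 < k →
      ((∀ r : ℕ, r + 1 ≤ k → ∃ m : M,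
          Finset.univ.inf' Finset.univ_nonempty
              (fun m' => ((k : ℝ) - (r : ℝ)) * (a m' : ℝ) + (r : ℝ) * (b m' : ℝ))
            = ((k : ℝ) - (r : ℝ)) * (a m : ℝ) + (r : ℝ) * (b m : ℝ) ∧
          Finset.univ.inf' Finset.univ_nonempty
              (fun m' => ((k : ℝ) - ((r : ℝ) + 1)) * (a m' : ℝ) + ((r : ℝ) + 1) * (b m' : ℝ))
            = ((k : ℝ) - ((r : ℝ) + 1)) * (a m : ℝ) + ((r : ℝ) + 1) * (b m : ℝ))
        ↔ k₀ ∣ k) := by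
  classical
  have hex : ∃ k : ℕ, 0 < k ∧ kQ a b k := exists_kQ
  refine ⟨Nat.find hex, (Nat.find_spec hex).1, ?_⟩
  intro k hk
  have hstmtP : (∀ r : ℕ, r + 1 ≤ k → ∃ m : M,
          Finset.univ.inf' Finset.univ_nonempty
              (fun m' => ((k : ℝ) - (r : ℝ)) * (a m' : ℝ) + (r : ℝ) * (b m' : ℝ))
            = ((k : ℝ) - (r : ℝ)) * (a m : ℝ) + (r : ℝ) * (b m : ℝ) ∧
          Finset.univ.inf' Finset.univ_nonempty
              (fun m' => ((k : ℝ) - ((r : ℝ) + 1)) * (a m' : ℝ) + ((r : ℝ) + 1) * (b m' : ℝ))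
            = ((k : ℝ) - ((r : ℝ) + 1)) * (a m : ℝ) + ((r : ℝ) + 1) * (b m : ℝ))
      ↔ kP a b k := by
    apply forall_congr'
    intro r
    apply imp_congr_right
    intro _
    apply exists_congr
    intro m
    exact and_congr (kscale hk (r : ℝ) m) (kscale hk ((r : ℝ) + 1) m)
  rw [hstmtP]
  constructor
  · intro hPk
    have hQk : kQ a b k := kP_imp_kQ hk hPk
    set g := Nat.gcd (Nat.find hex) k with hg
    have hQg : kQ a b g := kQ_gcd (Nat.find_spec hex).1 hk (Nat.find_spec hex).2 hQk
    have hg0 : 0 < g := Nat.gcd_pos_of_pos_left _ (Nat.find_spec hex).1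
    have hle : Nat.find hex ≤ g := Nat.find_min' hex ⟨hg0, hQg⟩
    have hdvd : g ∣ Nat.find hex := Nat.gcd_dvd_left _ _
    have hgeq : g = Nat.find hex :=
      Nat.le_antisymm (Nat.le_of_dvd (Nat.find_spec hex).1 hdvd) hle
    rw [← hgeq]
    exact Nat.gcd_dvd_right _ _
  · rintro ⟨c, rfl⟩
    have hc : 0 < c := by
      rcases Nat.eq_zero_or_pos c with h | h
      · subst h; simp at hk
      · exact h
    exact kQ_imp_kP hk (kQ_mul hc (Nat.find_spec hex).2)
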